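/- arXiv:1803.02136 — 3 statements merged into one kernel-verified Lean document; each statement's English description precedes it below -/
import Mathlib

section
/- Fix a positive integer r, real constants C_{r₁,r₂,r₃} indexed by nonnegative integers with r₁+r₂+r₃ ≤ r, and for each n ≥ 2 a function h_n : {1,…,n-1} → ℝ. Define C_n(i) = n^{-r}( ∑_{r₁+r₂+r₃ ≤ r} C_{r₁,r₂,r₃} i^{r₁} (n-i)^{r₂} n^{r₃} + h_n(i) ) for 1 ≤ i ≤ n-1, and C(x) = ∑_{r₁+r₂+r₃ = r} C_{r₁,r₂,r₃} x^{r₁} (1-x)^{r₂} for x ∈ [0,1]. Then there exists a constant K (depending only on r and the constants C_{r₁,r₂,r₃}) such that for all n ≥ 2, sup_{x ∈ [0,1)} | C_n(⌊(n-1)x⌋ + 1) − C(x) | ≤ sup_{1≤i≤n-1} n^{-r}|h_n(i)| + K/n. -/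
lemma aux_pow_lip {a c : ℝ} (ha : |a| ≤ 1) (hc : |c| ≤ 1) (p : ℕ) :
    |a ^ p - c ^ p| ≤ p * |a - c| := by
  induction p with
  | zero => simp
  | succ p ih =>
    have hid : a ^ (p + 1) - c ^ (p + 1) = (a - c) * a ^ p + c * (a ^ p - c ^ p) := by ring
    have h1 : |a ^ p| ≤ 1 := by rw [abs_pow]; exact pow_le_one₀ (abs_nonneg a) ha
    calc |a ^ (p + 1) - c ^ (p + 1)| ≤ |(a - c) * a ^ p| + |c * (a ^ p - c ^ p)| := by
          rw [hid]; exact abs_add_le _ _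
      _ = |a - c| * |a ^ p| + |c| * |a ^ p - c ^ p| := by rw [abs_mul, abs_mul]
      _ ≤ |a - c| * 1 + 1 * (p * |a - c|) :=
          add_le_add (mul_le_mul_of_nonneg_left h1 (abs_nonneg _))
            (mul_le_mul hc ih (abs_nonneg _) zero_le_one)
      _ = (↑(p + 1)) * |a - c| := by push_cast; ring

lemma aux_prod_lip {a b c d : ℝ} (ha : |a| ≤ 1) (hb : |b| ≤ 1) (hc : |c| ≤ 1) (hd : |d| ≤ 1)
    (p s : ℕ) : |a ^ p * b ^ s - c ^ p * d ^ s| ≤ p * |a - c| + s * |b - d| := by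
  have hid : a ^ p * b ^ s - c ^ p * d ^ s = (a ^ p - c ^ p) * b ^ s + c ^ p * (b ^ s - d ^ s) := by
    ring
  have h1 : |b ^ s| ≤ 1 := by rw [abs_pow]; exact pow_le_one₀ (abs_nonneg b) hb
  have h2 : |c ^ p| ≤ 1 := by rw [abs_pow]; exact pow_le_one₀ (abs_nonneg c) hc
  calc |a ^ p * b ^ s - c ^ p * d ^ s|
      ≤ |a ^ p - c ^ p| * |b ^ s| + |c ^ p| * |b ^ s - d ^ s| := by
        rw [hid]; exact le_trans (abs_add_le _ _) (by rw [abs_mul, abs_mul])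
    _ ≤ (p * |a - c|) * 1 + 1 * (s * |b - d|) :=
        add_le_add (mul_le_mul (aux_pow_lip ha hc p) h1 (abs_nonneg _)
            (by positivity))
          (mul_le_mul h2 (aux_pow_lip hb hd s) (abs_nonneg _) zero_le_one)
    _ = p * |a - c| + s * |b - d| := by ring


open Finset

/-- The non-homogeneous ("toll") term `C_n(i)` of the finite-`n` recursion:
`C_n(i) = n^{-r} ( ∑_{r₁+r₂+r₃ ≤ r} C_{r₁,r₂,r₃} i^{r₁} (n-i)^{r₂} n^{r₃} + h_n(i) )`. -/
noncomputable def tollCn (r : ℕ) (Cc : ℕ → ℕ → ℕ → ℝ) (h : ℕ → ℕ → ℝ) (n i : ℕ) : ℝ :=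
  (n : ℝ) ^ (-(r : ℤ)) *
    ((∑ q ∈ ((range (r + 1)) ×ˢ (range (r + 1)) ×ˢ (range (r + 1))).filter
        (fun q => q.1 + q.2.1 + q.2.2 ≤ r),
        Cc q.1 q.2.1 q.2.2 * (i : ℝ) ^ q.1 * ((n : ℝ) - (i : ℝ)) ^ q.2.1 * (n : ℝ) ^ q.2.2)
      + h n i)

/-- The limiting toll function
`C(x) = ∑_{r₁+r₂+r₃ = r} C_{r₁,r₂,r₃} x^{r₁} (1-x)^{r₂}`. -/
noncomputable def tollC (r : ℕ) (Cc : ℕ → ℕ → ℕ → ℝ) (x : ℝ) : ℝ :=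
  ∑ q ∈ ((range (r + 1)) ×ˢ (range (r + 1)) ×ˢ (range (r + 1))).filter
      (fun q => q.1 + q.2.1 + q.2.2 = r),
    Cc q.1 q.2.1 q.2.2 * x ^ q.1 * (1 - x) ^ q.2.1

/-- Lemma 2 of the paper (cf. Prop. 3.2 of Rösler 1991): uniform control of the
distance between the finite-`n` toll term and its limit. -/
theorem toll_uniform_bound (r : ℕ) (hr : 1 ≤ r) (Cc : ℕ → ℕ → ℕ → ℝ) (h : ℕ → ℕ → ℝ) :
    ∃ K : ℝ, ∀ n : ℕ, ∀ hn : 2 ≤ n, ∀ x ∈ Set.Ico (0 : ℝ) 1,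
      |tollCn r Cc h n ((⌊((n : ℝ) - 1) * x⌋).toNat + 1) - tollC r Cc x| ≤
        (Finset.Icc 1 (n - 1)).sup' (Finset.nonempty_Icc.mpr (by omega))
          (fun i => (n : ℝ) ^ (-(r : ℤ)) * |h n i|) + K / n := by
  classical
  set T : Finset (ℕ × ℕ × ℕ) :=
    ((range (r + 1)) ×ˢ (range (r + 1)) ×ˢ (range (r + 1))).filter
      (fun q => q.1 + q.2.1 + q.2.2 ≤ r) with hT
  refine ⟨(r : ℝ) * ∑ q ∈ T, |Cc q.1 q.2.1 q.2.2|, ?_⟩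
  intro n hn x hx
  obtain ⟨hx0, hx1⟩ := hx
  have hn0 : (0:ℝ) < n := by exact_mod_cast Nat.lt_of_lt_of_le Nat.zero_lt_two hn
  have hn1 : (1:ℝ) ≤ n := by exact_mod_cast (by omega : 1 ≤ n)
  have hnne : (n:ℝ) ≠ 0 := ne_of_gt hn0
  have hfl0 : (0:ℤ) ≤ ⌊((n:ℝ) - 1) * x⌋ :=
    Int.floor_nonneg.mpr (mul_nonneg (by linarith) hx0)
  set i : ℕ := (⌊((n:ℝ) - 1) * x⌋).toNat + 1 with hidef
  have hicast : ((i:ℝ)) = (⌊((n:ℝ) - 1) * x⌋ : ℝ) + 1 := by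
    have h' : ((⌊((n:ℝ) - 1) * x⌋.toNat : ℝ)) = ((⌊((n:ℝ) - 1) * x⌋ : ℤ) : ℝ) := by
      exact_mod_cast congrArg (fun z : ℤ => (z : ℝ)) (Int.toNat_of_nonneg hfl0)
    rw [hidef, Nat.cast_add, Nat.cast_one, h']
  have hlow : ((n:ℝ) - 1) * x < i := by
    rw [hicast]; exact Int.lt_floor_add_one _
  have hup : (i:ℝ) ≤ ((n:ℝ) - 1) * x + 1 := by
    rw [hicast]
    have := Int.floor_le (((n:ℝ) - 1) * x)
    linarith
  have hn2 : (2:ℝ) ≤ n := by exact_mod_cast hn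
  have hiltn : (i:ℝ) < n := by
    nlinarith [mul_lt_mul_of_pos_left hx1 (show (0:ℝ) < (n:ℝ) - 1 by linarith)]
  have hiNlt : i < n := by exact_mod_cast hiltn
  have hiIcc : i ∈ Finset.Icc 1 (n - 1) := Finset.mem_Icc.mpr ⟨by omega, by omega⟩
  have hiR0 : (0:ℝ) ≤ i := Nat.cast_nonneg i
  have hni0 : (0:ℝ) ≤ (n:ℝ) - i := by linarith
  -- distance bounds
  have hd1 : |(i:ℝ) - n * x| ≤ 1 := by
    rw [abs_le]; constructor <;> nlinarith
  have hdx : |(i:ℝ)/n - x| ≤ 1/n := by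
    have hE : (i:ℝ)/n - x = ((i:ℝ) - n * x)/n := by field_simp
    rw [hE, abs_div, abs_of_pos hn0]
    gcongr
  have hdb : |((n:ℝ) - i)/n - (1 - x)| ≤ 1/n := by
    have hE : ((n:ℝ) - i)/n - (1 - x) = -((i:ℝ)/n - x) := by field_simp; ring
    rw [hE, abs_neg]; exact hdx
  -- abs-in-[0,1] facts
  have ha0 : (0:ℝ) ≤ (i:ℝ)/n := by positivity
  have ha1 : (i:ℝ)/n ≤ 1 := by rw [div_le_one hn0]; linarith
  have haabs : |(i:ℝ)/n| ≤ 1 := abs_le.mpr ⟨by linarith, ha1⟩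
  have hb0 : (0:ℝ) ≤ ((n:ℝ) - i)/n := div_nonneg hni0 hn0.le
  have hb1 : ((n:ℝ) - i)/n ≤ 1 := by rw [div_le_one hn0]; linarith
  have hbabs : |((n:ℝ) - i)/n| ≤ 1 := abs_le.mpr ⟨by linarith, hb1⟩
  have hxabs : |x| ≤ 1 := abs_le.mpr ⟨by linarith, by linarith⟩
  have h1xabs : |1 - x| ≤ 1 := abs_le.mpr ⟨by linarith, by linarith⟩
  set ninv : ℝ := (n:ℝ) ^ (-(r:ℤ)) with hninvdef
  have hninv : ninv = ((n:ℝ) ^ r)⁻¹ := by rw [hninvdef, zpow_neg, zpow_natCast]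
  have hninv0 : (0:ℝ) ≤ ninv := by rw [hninv]; positivity
  -- rewrite tollC as a sum over T
  have hCsum : tollC r Cc x = ∑ q ∈ T,
      (if q.1 + q.2.1 + q.2.2 = r then Cc q.1 q.2.1 q.2.2 * x ^ q.1 * (1 - x) ^ q.2.1 else 0) := by
    rw [tollC, hT, Finset.sum_filter, Finset.sum_filter]
    refine Finset.sum_congr rfl fun q _ => ?_
    by_cases hq : q.1 + q.2.1 + q.2.2 = r
    · simp [hq]
    · simp [hq]
  -- key decomposition
  have hkey : tollCn r Cc h n i - tollC r Cc x
      = (∑ q ∈ T, (ninv * (Cc q.1 q.2.1 q.2.2 * (i:ℝ) ^ q.1 * ((n:ℝ) - (i:ℝ)) ^ q.2.1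
            * (n:ℝ) ^ q.2.2)
          - if q.1 + q.2.1 + q.2.2 = r then Cc q.1 q.2.1 q.2.2 * x ^ q.1 * (1 - x) ^ q.2.1
            else 0))
        + ninv * h n i := by
    rw [tollCn, hCsum, ← hT, ← hninvdef, mul_add, Finset.mul_sum, Finset.sum_sub_distrib]
    ring
  -- termwise bound
  have hterm : ∀ q ∈ T,
      |ninv * (Cc q.1 q.2.1 q.2.2 * (i:ℝ) ^ q.1 * ((n:ℝ) - (i:ℝ)) ^ q.2.1 * (n:ℝ) ^ q.2.2)
        - if q.1 + q.2.1 + q.2.2 = r then Cc q.1 q.2.1 q.2.2 * x ^ q.1 * (1 - x) ^ q.2.1 else 0|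
      ≤ |Cc q.1 q.2.1 q.2.2| * ((r:ℝ) / n) := by
    intro q hq
    rw [hT, Finset.mem_filter] at hq
    have hqle : q.1 + q.2.1 + q.2.2 ≤ r := hq.2
    by_cases heq : q.1 + q.2.1 + q.2.2 = r
    · rw [if_pos heq]
      have hnr : (n:ℝ) ^ r = (n:ℝ) ^ q.1 * (n:ℝ) ^ q.2.1 * (n:ℝ) ^ q.2.2 := by
        rw [← heq, pow_add, pow_add]
      have hnp : ((n:ℝ) ^ q.1) ≠ 0 := pow_ne_zero _ hnne
      have hns : ((n:ℝ) ^ q.2.1) ≠ 0 := pow_ne_zero _ hnne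
      have hnt : ((n:ℝ) ^ q.2.2) ≠ 0 := pow_ne_zero _ hnne
      have hEq : ninv * (Cc q.1 q.2.1 q.2.2 * (i:ℝ) ^ q.1 * ((n:ℝ) - (i:ℝ)) ^ q.2.1
            * (n:ℝ) ^ q.2.2) - Cc q.1 q.2.1 q.2.2 * x ^ q.1 * (1 - x) ^ q.2.1
          = Cc q.1 q.2.1 q.2.2 * (((i:ℝ)/n) ^ q.1 * (((n:ℝ) - i)/n) ^ q.2.1
              - x ^ q.1 * (1 - x) ^ q.2.1) := by
        rw [hninv, hnr, div_pow, div_pow]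
        field_simp
      rw [hEq, abs_mul]
      have hps : (q.1:ℝ) + (q.2.1:ℝ) ≤ (r:ℝ) := by
        exact_mod_cast (by omega : q.1 + q.2.1 ≤ r)
      have step : |((i:ℝ)/n) ^ q.1 * (((n:ℝ) - i)/n) ^ q.2.1 - x ^ q.1 * (1 - x) ^ q.2.1|
          ≤ (r:ℝ) / n := by
        calc |((i:ℝ)/n) ^ q.1 * (((n:ℝ) - i)/n) ^ q.2.1 - x ^ q.1 * (1 - x) ^ q.2.1|
            ≤ (q.1:ℝ) * |(i:ℝ)/n - x| + (q.2.1:ℝ) * |((n:ℝ) - i)/n - (1 - x)| :=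
              aux_prod_lip haabs hbabs hxabs h1xabs q.1 q.2.1
          _ ≤ (q.1:ℝ) * (1/n) + (q.2.1:ℝ) * (1/n) :=
              add_le_add (mul_le_mul_of_nonneg_left hdx (Nat.cast_nonneg _))
                (mul_le_mul_of_nonneg_left hdb (Nat.cast_nonneg _))
          _ = ((q.1:ℝ) + (q.2.1:ℝ)) / n := by ring
          _ ≤ (r:ℝ) / n := by gcongr
      exact mul_le_mul_of_nonneg_left step (abs_nonneg _)
    · rw [if_neg heq, sub_zero]
      have hX0 : (0:ℝ) ≤ (i:ℝ) ^ q.1 * ((n:ℝ) - i) ^ q.2.1 * (n:ℝ) ^ q.2.2 :=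
        mul_nonneg (mul_nonneg (pow_nonneg hiR0 _) (pow_nonneg hni0 _)) (pow_nonneg hn0.le _)
      have hE2 : ninv * (Cc q.1 q.2.1 q.2.2 * (i:ℝ) ^ q.1 * ((n:ℝ) - (i:ℝ)) ^ q.2.1
            * (n:ℝ) ^ q.2.2)
          = Cc q.1 q.2.1 q.2.2 * (ninv * ((i:ℝ) ^ q.1 * ((n:ℝ) - i) ^ q.2.1 * (n:ℝ) ^ q.2.2)) := by
        ring
      rw [hE2, abs_mul, abs_of_nonneg (mul_nonneg hninv0 hX0)]
      refine mul_le_mul_of_nonneg_left ?_ (abs_nonneg _)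
      have hXle : (i:ℝ) ^ q.1 * ((n:ℝ) - i) ^ q.2.1 * (n:ℝ) ^ q.2.2
          ≤ (n:ℝ) ^ (q.1 + q.2.1 + q.2.2) := by
        rw [pow_add, pow_add]
        exact mul_le_mul (mul_le_mul (pow_le_pow_left₀ hiR0 hiltn.le _)
          (pow_le_pow_left₀ hni0 (by linarith) _) (pow_nonneg hni0 _) (pow_nonneg hn0.le _))
          le_rfl (pow_nonneg hn0.le _) (mul_nonneg (pow_nonneg hn0.le _) (pow_nonneg hn0.le _))
      have hXle2 : (n:ℝ) ^ (q.1 + q.2.1 + q.2.2) ≤ (n:ℝ) ^ (r - 1) :=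
        pow_le_pow_right₀ hn1 (by omega)
      have hfin : ninv * (n:ℝ) ^ (r - 1) = 1 / n := by
        rw [hninv]
        have hr' : r - 1 + 1 = r := by omega
        rw [← hr', pow_succ, mul_inv]
        field_simp
        rw [Nat.add_sub_cancel]
      calc ninv * ((i:ℝ) ^ q.1 * ((n:ℝ) - i) ^ q.2.1 * (n:ℝ) ^ q.2.2)
          ≤ ninv * (n:ℝ) ^ (r - 1) :=
            mul_le_mul_of_nonneg_left (hXle.trans hXle2) hninv0
        _ = 1 / n := hfin
        _ ≤ (r:ℝ) / n := by gcongr; exact_mod_cast hr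
  -- assemble
  have hsup : ninv * |h n i| ≤ (Finset.Icc 1 (n - 1)).sup'
      (Finset.nonempty_Icc.mpr (by omega)) (fun j => ninv * |h n j|) :=
    Finset.le_sup' (fun j => ninv * |h n j|) hiIcc
  calc |tollCn r Cc h n i - tollC r Cc x|
      ≤ (∑ q ∈ T, |ninv * (Cc q.1 q.2.1 q.2.2 * (i:ℝ) ^ q.1 * ((n:ℝ) - (i:ℝ)) ^ q.2.1
            * (n:ℝ) ^ q.2.2)
          - if q.1 + q.2.1 + q.2.2 = r then Cc q.1 q.2.1 q.2.2 * x ^ q.1 * (1 - x) ^ q.2.1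
            else 0|) + |ninv * h n i| := by
        rw [hkey]
        exact (abs_add_le _ _).trans (add_le_add_left (Finset.abs_sum_le_sum_abs _ _) _)
    _ ≤ (∑ q ∈ T, |Cc q.1 q.2.1 q.2.2| * ((r:ℝ) / n)) + ninv * |h n i| := by
        refine add_le_add (Finset.sum_le_sum hterm) ?_
        rw [abs_mul, abs_of_nonneg hninv0]
    _ ≤ (Finset.Icc 1 (n - 1)).sup' (Finset.nonempty_Icc.mpr (by omega))
          (fun j => ninv * |h n j|) + ((r:ℝ) * ∑ q ∈ T, |Cc q.1 q.2.1 q.2.2|) / n := by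
        rw [add_comm]
        refine add_le_add hsup (le_of_eq ?_)
        rw [← Finset.sum_mul]
        ring
end

section
/- For all real numbers β > 0 and R > 1, Γ(2β+2)·Γ(β+R+1) < (1/2)·Γ(β+1)·Γ(2β+R+2), i.e. (Γ(2β+2)/Γ(β+1))·(Γ(β+R+1)/Γ(2β+R+2)) < 1/2. Moreover, at R = 1 equality holds: (Γ(2β+2)/Γ(β+1))·(Γ(β+2)/Γ(2β+3)) = 1/2. -/
open intervalIntegral Real

lemma real_beta_integral (a b : ℝ) (ha : 0 < a) (hb : 0 < b) :
    Real.Gamma a * Real.Gamma b =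
      Real.Gamma (a + b) * ∫ x in (0:ℝ)..1, x ^ (a - 1) * (1 - x) ^ (b - 1) := by
  have key := Complex.Gamma_mul_Gamma_eq_betaIntegral (s := (a : ℂ)) (t := (b : ℂ))
      (by simpa using ha) (by simpa using hb)
  have hbeta : Complex.betaIntegral (a : ℂ) (b : ℂ) =
      ((∫ x in (0:ℝ)..1, x ^ (a - 1) * (1 - x) ^ (b - 1) : ℝ) : ℂ) := by
    rw [Complex.betaIntegral, ← intervalIntegral.integral_ofReal]
    apply intervalIntegral.integral_congr
    intro x hx
    rw [Set.uIcc_of_le (by norm_num : (0:ℝ) ≤ 1)] at hx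
    have hx0 : 0 ≤ x := hx.1
    have hx1 : 0 ≤ 1 - x := by linarith [hx.2]
    push_cast
    rw [Complex.ofReal_cpow hx0, Complex.ofReal_cpow hx1]
    push_cast
    ring
  simp only [hbeta, ← Complex.ofReal_add, Complex.Gamma_ofReal, ← Complex.ofReal_mul] at key
  exact_mod_cast key

/-- The key Gamma-function estimate for the contraction condition in Aldous's
`β > 0` model: for `R > 1` the `R`-th Beta(β+1,β+1) moment bound is strictly
below `1/2`, with equality at `R = 1`. -/
theorem gamma_ratio_lt_half (β R : ℝ) (hβ : 0 < β) (hR : 1 < R) :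
    Real.Gamma (2 * β + 2) * Real.Gamma (β + R + 1) <
        (1 / 2) * (Real.Gamma (β + 1) * Real.Gamma (2 * β + R + 2)) ∧
    (Real.Gamma (2 * β + 2) / Real.Gamma (β + 1)) *
        (Real.Gamma (β + R + 1) / Real.Gamma (2 * β + R + 2)) < 1 / 2 ∧
    (Real.Gamma (2 * β + 2) / Real.Gamma (β + 1)) *
        (Real.Gamma (β + 2) / Real.Gamma (2 * β + 3)) = 1 / 2 := by
  have hg1 : 0 < Real.Gamma (β + 1) := Real.Gamma_pos_of_pos (by linarith)
  have hg2 : 0 < Real.Gamma (β + 2) := Real.Gamma_pos_of_pos (by linarith)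
  have hg3 : 0 < Real.Gamma (2 * β + 2) := Real.Gamma_pos_of_pos (by linarith)
  have hg4 : 0 < Real.Gamma (2 * β + 3) := Real.Gamma_pos_of_pos (by linarith)
  have hg5 : 0 < Real.Gamma (β + R + 1) := Real.Gamma_pos_of_pos (by linarith)
  have hg6 : 0 < Real.Gamma (2 * β + R + 2) := Real.Gamma_pos_of_pos (by linarith)
  -- recurrences
  have e2 : Real.Gamma (β + 2) = (β + 1) * Real.Gamma (β + 1) := by
    have := Real.Gamma_add_one (s := β + 1) (by positivity)
    rw [show β + 1 + 1 = β + 2 by ring] at this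
    exact this
  have e4 : Real.Gamma (2 * β + 3) = (2 * β + 2) * Real.Gamma (2 * β + 2) := by
    have := Real.Gamma_add_one (s := 2 * β + 2) (by positivity)
    rw [show 2 * β + 2 + 1 = 2 * β + 3 by ring] at this
    exact this
  -- beta identities
  set I₁ : ℝ := ∫ x in (0:ℝ)..1, x ^ (β + R) * (1 - x) ^ β with hI₁
  set I₂ : ℝ := ∫ x in (0:ℝ)..1, x ^ (β + 1) * (1 - x) ^ β with hI₂
  have A1 : Real.Gamma (β + R + 1) * Real.Gamma (β + 1) = Real.Gamma (2 * β + R + 2) * I₁ := by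
    have := real_beta_integral (β + R + 1) (β + 1) (by linarith) (by linarith)
    rw [show β + R + 1 + (β + 1) = 2 * β + R + 2 by ring] at this
    simp only [show β + R + 1 - 1 = β + R from by ring, show β + 1 - 1 = β from by ring] at this
    rw [this, hI₁]
  have A2 : Real.Gamma (β + 2) * Real.Gamma (β + 1) = Real.Gamma (2 * β + 3) * I₂ := by
    have := real_beta_integral (β + 2) (β + 1) (by linarith) (by linarith)
    rw [show β + 2 + (β + 1) = 2 * β + 3 by ring] at this
    simp only [show β + 2 - 1 = β + 1 from by ring, show β + 1 - 1 = β from by ring] at this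
    rw [this, hI₂]
  -- the strict integral inequality
  have hIlt : I₁ < I₂ := by
    apply intervalIntegral.integral_lt_integral_of_continuousOn_of_le_of_exists_lt
      (by norm_num : (0:ℝ) < 1)
    · exact (continuousOn_id.rpow_const fun x _ => Or.inr (by linarith)).mul
        ((continuousOn_const.sub continuousOn_id).rpow_const fun x _ => Or.inr hβ.le)
    · exact (continuousOn_id.rpow_const fun x _ => Or.inr (by linarith)).mul
        ((continuousOn_const.sub continuousOn_id).rpow_const fun x _ => Or.inr hβ.le)
    · intro x hx
      have hx0 : 0 < x := hx.1
      have hx1 : x ≤ 1 := hx.2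
      have : x ^ (β + R) ≤ x ^ (β + 1) := by
        rcases eq_or_lt_of_le hx1 with h | h
        · subst h; simp
        · exact le_of_lt (Real.rpow_lt_rpow_of_exponent_gt hx0 h (by linarith))
      have h2 : (0:ℝ) ≤ (1 - x) ^ β := Real.rpow_nonneg (by linarith) _
      exact mul_le_mul_of_nonneg_right this h2
    · refine ⟨1/2, by norm_num, ?_⟩
      have h1 : ((1:ℝ)/2) ^ (β + R) < ((1:ℝ)/2) ^ (β + 1) :=
        Real.rpow_lt_rpow_of_exponent_gt (by norm_num) (by norm_num) (by linarith)
      have h2 : (0:ℝ) < (1 - 1/2) ^ β := Real.rpow_pos_of_pos (by norm_num) _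
      exact mul_lt_mul_of_pos_right h1 h2
  -- combine: Γ(β+1)^2 = 2 * Γ(2β+2) * I₂
  have hsq : Real.Gamma (β + 1) ^ 2 = 2 * Real.Gamma (2 * β + 2) * I₂ := by
    have h := A2
    rw [e2, e4] at h
    have hβ1 : (0:ℝ) < β + 1 := by linarith
    nlinarith [h]
  have main : Real.Gamma (2 * β + 2) * Real.Gamma (β + R + 1) <
      (1 / 2) * (Real.Gamma (β + 1) * Real.Gamma (2 * β + R + 2)) := by
    rw [← mul_lt_mul_iff_of_pos_right hg1]
    have lhs_eq : Real.Gamma (2 * β + 2) * Real.Gamma (β + R + 1) * Real.Gamma (β + 1)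
        = Real.Gamma (2 * β + 2) * (Real.Gamma (2 * β + R + 2) * I₁) := by
      rw [← A1]; ring
    have rhs_eq : (1 / 2) * (Real.Gamma (β + 1) * Real.Gamma (2 * β + R + 2)) * Real.Gamma (β + 1)
        = Real.Gamma (2 * β + 2) * (Real.Gamma (2 * β + R + 2) * I₂) := by
      have : Real.Gamma (β + 1) * Real.Gamma (β + 1) = Real.Gamma (β + 1) ^ 2 := by ring
      nlinarith [hsq]
    rw [lhs_eq, rhs_eq]
    have := mul_pos hg3 hg6
    exact mul_lt_mul_of_pos_left (mul_lt_mul_of_pos_left hIlt hg6) hg3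
  refine ⟨main, ?_, ?_⟩
  · rw [div_mul_div_comm, div_lt_iff₀ (by positivity)]
    calc Real.Gamma (2 * β + 2) * Real.Gamma (β + R + 1)
        < (1 / 2) * (Real.Gamma (β + 1) * Real.Gamma (2 * β + R + 2)) := main
      _ = 1 / 2 * (Real.Gamma (β + 1) * Real.Gamma (2 * β + R + 2)) := by ring
  · rw [e2, e4]
    field_simp
end

section
/- Let β > 0 and R > 1 be real numbers, let τ have the Beta(β+1,β+1) distribution, and set p_{n,i} = P((i−1)/n < τ ≤ i/n) for n ≥ 1, 1 ≤ i ≤ n. Then limsup_{n→∞} ∑_{i=1}^{n} p_{n,i} (i/n)^{R} ≤ (Γ(2β+2)/Γ(β+1))·(Γ(β+R+1)/Γ(2β+R+2)) < 1/2. In particular, for every integer r ≥ 1, for all sufficiently large n one has 2·∑_{i=1}^{n} p_{n,i} (i/n)^{2r} < 1. -/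
open MeasureTheory

/-- The Beta function `B(x,y) = ∫₀¹ u^(x-1) (1-u)^(y-1) du`. -/
noncomputable def betaFn (x y : ℝ) : ℝ :=
  ∫ u in Set.Ioo (0 : ℝ) 1, u ^ (x - 1) * (1 - u) ^ (y - 1)

/-- The `Beta(β+1, β+1)` probability measure on `ℝ`, with density
`x^β (1-x)^β / B(β+1, β+1)` on `(0,1)`. -/
noncomputable def betaMeasure (β : ℝ) : Measure ℝ :=
  (volume.restrict (Set.Ioo (0 : ℝ) 1)).withDensity
    (fun x => ENNReal.ofReal (x ^ β * (1 - x) ^ β / betaFn (β + 1) (β + 1)))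

open Set Filter

lemma intgOn (a b : ℝ) (ha : 0 ≤ a) (hb : 0 ≤ b) :
    IntegrableOn (fun x : ℝ => x ^ a * (1 - x) ^ b) (Set.Ioo 0 1) := by
  refine Integrable.mono' (g := fun _ => (1:ℝ)) ?_ ?_ ?_
  · rw [← IntegrableOn, integrableOn_const_iff (C := (1:ℝ))]
    exact Or.inr (by simp [Real.volume_Ioo])
  · exact ((Real.continuous_rpow_const ha).mul
      ((Real.continuous_rpow_const hb).comp (continuous_const.sub continuous_id))).aestronglyMeasurable
  · refine (ae_restrict_iff' measurableSet_Ioo).2 (Filter.Eventually.of_forall ?_)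
    intro x hx
    have h1 : 0 ≤ x ^ a := Real.rpow_nonneg hx.1.le a
    have h2 : 0 ≤ (1 - x) ^ b := Real.rpow_nonneg (by linarith [hx.2]) b
    rw [Real.norm_eq_abs, abs_of_nonneg (mul_nonneg h1 h2)]
    have := Real.rpow_le_one hx.1.le hx.2.le ha
    have := Real.rpow_le_one (by linarith [hx.2] : (0:ℝ) ≤ 1 - x) (by linarith [hx.1] : 1 - x ≤ 1) hb
    calc x ^ a * (1 - x) ^ b ≤ 1 := by nlinarith
      _ = (fun _ => (1:ℝ)) x := rfl

lemma betaFn_eq (x y : ℝ) (hx : 0 < x) (hy : 0 < y) :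
    betaFn x y = Real.Gamma x * Real.Gamma y / Real.Gamma (x + y) := by
  have key : Complex.betaIntegral x y = Complex.ofReal (betaFn x y) := by
    rw [Complex.betaIntegral, intervalIntegral.integral_of_le (by norm_num : (0:ℝ) ≤ 1),
      integral_Ioc_eq_integral_Ioo]
    have e : ∫ t in Ioo (0:ℝ) 1, ((t:ℂ) ^ ((x:ℂ)-1) * (1-(t:ℂ)) ^ ((y:ℂ)-1))
        = ∫ t in Ioo (0:ℝ) 1, ((t ^ (x-1) * (1-t) ^ (y-1) : ℝ) : ℂ) := by
      refine setIntegral_congr_fun measurableSet_Ioo (fun u hu => ?_)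
      rw [Complex.ofReal_mul, Complex.ofReal_cpow hu.1.le, Complex.ofReal_cpow (by linarith [hu.2])]
      push_cast
      ring
    rw [e]
    exact integral_ofReal
  have h := Complex.Gamma_mul_Gamma_eq_betaIntegral
    (by simpa using hx : 0 < (x:ℂ).re) (by simpa using hy : 0 < (y:ℂ).re)
  rw [key] at h
  have hxy : ((x:ℂ) + y) = ((x + y : ℝ) : ℂ) := by push_cast; ring
  rw [hxy, Complex.Gamma_ofReal, Complex.Gamma_ofReal, Complex.Gamma_ofReal] at h
  have h' : Real.Gamma x * Real.Gamma y = Real.Gamma (x + y) * betaFn x y := by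
    exact_mod_cast h
  have hpos : 0 < Real.Gamma (x + y) := Real.Gamma_pos_of_pos (by linarith)
  field_simp
  linarith [h']

lemma betaFn_pos (x y : ℝ) (hx : 0 < x) (hy : 0 < y) : 0 < betaFn x y := by
  rw [betaFn_eq x y hx hy]
  exact div_pos (mul_pos (Real.Gamma_pos_of_pos hx) (Real.Gamma_pos_of_pos hy))
    (Real.Gamma_pos_of_pos (by linarith))

lemma betaMeasure_apply (β : ℝ) {S : Set ℝ} (hβ : 0 < β) (hS : MeasurableSet S) :
    (betaMeasure β S).toReal
      = ∫ x in S ∩ Set.Ioo 0 1, x ^ β * (1 - x) ^ β / betaFn (β + 1) (β + 1) := by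
  have hB : 0 < betaFn (β + 1) (β + 1) := betaFn_pos _ _ (by linarith) (by linarith)
  have hint : IntegrableOn (fun x : ℝ => x ^ β * (1 - x) ^ β / betaFn (β + 1) (β + 1))
      (S ∩ Set.Ioo 0 1) :=
    (show IntegrableOn (fun x : ℝ => x ^ β * (1 - x) ^ β / betaFn (β + 1) (β + 1))
        (Set.Ioo 0 1) volume from (intgOn β β hβ.le hβ.le).div_const _).mono_set
      inter_subset_right
  have hnn : 0 ≤ᵐ[volume.restrict (S ∩ Set.Ioo 0 1)]
      fun x : ℝ => x ^ β * (1 - x) ^ β / betaFn (β + 1) (β + 1) := by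
    refine (ae_restrict_iff' (hS.inter measurableSet_Ioo)).2 (Filter.Eventually.of_forall ?_)
    intro x hx
    exact div_nonneg (mul_nonneg (Real.rpow_nonneg hx.2.1.le _)
      (Real.rpow_nonneg (by linarith [hx.2.2]) _)) hB.le
  rw [betaMeasure, withDensity_apply _ hS, Measure.restrict_restrict hS,
    ← ofReal_integral_eq_lintegral_ofReal hint hnn,
    ENNReal.toReal_ofReal (integral_nonneg_of_ae hnn)]

lemma intgOn2 (a b r h : ℝ) (ha : 0 ≤ a) (hb : 0 ≤ b) (hr : 0 ≤ r) (hh : 0 ≤ h) :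
    IntegrableOn (fun x : ℝ => x ^ a * (1 - x) ^ b * (x + h) ^ r) (Set.Ioo 0 1) := by
  refine Integrable.mono' (g := fun _ => ((1 + h) ^ r : ℝ)) ?_ ?_ ?_
  · rw [← IntegrableOn, integrableOn_const_iff (C := ((1 + h) ^ r : ℝ))]
    exact Or.inr (by simp [Real.volume_Ioo])
  · exact (((Real.continuous_rpow_const ha).mul
      ((Real.continuous_rpow_const hb).comp (continuous_const.sub continuous_id))).mul
      ((Real.continuous_rpow_const hr).comp (continuous_id.add continuous_const))).aestronglyMeasurable
  · refine (ae_restrict_iff' measurableSet_Ioo).2 (Filter.Eventually.of_forall ?_)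
    intro x hx
    have h1 : 0 ≤ x ^ a := Real.rpow_nonneg hx.1.le a
    have h2 : 0 ≤ (1 - x) ^ b := Real.rpow_nonneg (by linarith [hx.2]) b
    have h3 : 0 ≤ (x + h) ^ r := Real.rpow_nonneg (by linarith [hx.1]) r
    rw [Real.norm_eq_abs, abs_of_nonneg (mul_nonneg (mul_nonneg h1 h2) h3)]
    have e1 := Real.rpow_le_one hx.1.le hx.2.le ha
    have e2 := Real.rpow_le_one (by linarith [hx.2] : (0:ℝ) ≤ 1 - x)
      (by linarith [hx.1] : 1 - x ≤ 1) hb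
    have e3 : (x + h) ^ r ≤ (1 + h) ^ r :=
      Real.rpow_le_rpow (by linarith [hx.1]) (by linarith [hx.2]) hr
    calc x ^ a * (1 - x) ^ b * (x + h) ^ r ≤ 1 * 1 * (1 + h) ^ r := by
          apply mul_le_mul (by nlinarith) e3 h3 (by norm_num)
      _ = (fun _ => ((1 + h) ^ r : ℝ)) x := by simp

lemma density_nonneg (β : ℝ) (hβ : 0 < β) {x : ℝ} (hx : x ∈ Set.Ioo (0:ℝ) 1) :
    0 ≤ x ^ β * (1 - x) ^ β / betaFn (β + 1) (β + 1) :=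
  div_nonneg (mul_nonneg (Real.rpow_nonneg hx.1.le _)
    (Real.rpow_nonneg (by linarith [hx.2]) _))
    (betaFn_pos _ _ (by linarith) (by linarith)).le

lemma sum_le (β R : ℝ) (hβ : 0 < β) (hR : 1 ≤ R) (n : ℕ) (hn : 1 ≤ n) :
    ∑ i ∈ Finset.Icc 1 n,
        (betaMeasure β (Set.Ioc (((i : ℝ) - 1) / n) ((i : ℝ) / n))).toReal * ((i : ℝ) / n) ^ R
      ≤ ∫ x in Set.Ioo (0:ℝ) 1,
          x ^ β * (1 - x) ^ β / betaFn (β + 1) (β + 1) * (x + 1 / n) ^ R := by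
  have hn0 : (0:ℝ) < n := by exact_mod_cast hn
  set B := betaFn (β + 1) (β + 1) with hBdef
  set d : ℝ → ℝ := fun x => x ^ β * (1 - x) ^ β / B with hd
  set g : ℝ → ℝ := fun x => d x * (x + 1 / n) ^ R with hg
  set A : ℕ → Set ℝ := fun i => Set.Ioc (((i : ℝ) - 1) / n) ((i : ℝ) / n) ∩ Set.Ioo 0 1 with hA
  have hAmeas : ∀ i, MeasurableSet (A i) := fun i => measurableSet_Ioc.inter measurableSet_Ioo
  have hAsub : ∀ i, A i ⊆ Set.Ioo 0 1 := fun i => inter_subset_right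
  have hg_int : IntegrableOn g (Set.Ioo 0 1) := by
    have : g = fun x => x ^ β * (1 - x) ^ β * (x + 1 / n) ^ R / B := by
      funext x; simp only [hg, hd]; ring
    rw [this]
    exact (intgOn2 β β R (1 / n) hβ.le hβ.le (by linarith) (by positivity)).div_const _
  have hd_int : IntegrableOn d (Set.Ioo 0 1) := (intgOn β β hβ.le hβ.le).div_const _
  have step1 : ∀ i ∈ Finset.Icc 1 n,
      (betaMeasure β (Set.Ioc (((i : ℝ) - 1) / n) ((i : ℝ) / n))).toReal * ((i : ℝ) / n) ^ R
        ≤ ∫ x in A i, g x := by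
    intro i hi
    rw [betaMeasure_apply β hβ measurableSet_Ioc, ← integral_mul_const]
    refine setIntegral_mono_on ?_ (hg_int.mono_set (hAsub i)) (hAmeas i) ?_
    · exact (hd_int.mono_set (hAsub i)).mul_const _
    · intro x hx
      have hx1 : ((i : ℝ) - 1) / n < x := hx.1.1
      have hxI : x ∈ Set.Ioo (0:ℝ) 1 := hx.2
      have hkey : (i : ℝ) / n ≤ x + 1 / n := by
        have e : ((i : ℝ) - 1) / n = (i : ℝ) / n - 1 / n := by ring
        linarith [hx1, e ▸ hx1]
      have hpow : ((i : ℝ) / n) ^ R ≤ (x + 1 / n) ^ R :=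
        Real.rpow_le_rpow (by positivity) hkey (by linarith)
      exact mul_le_mul_of_nonneg_left hpow (density_nonneg β hβ hxI)
  have hdisj : Set.Pairwise ↑(Finset.Icc 1 n) (Function.onFun Disjoint A) := by
    intro i hi j hj hij
    have key : ∀ a b : ℕ, a < b →
        Disjoint (A a) (A b) := by
      intro a b hab
      refine Disjoint.mono inter_subset_left inter_subset_left ?_
      rw [Set.Ioc_disjoint_Ioc]
      have : (a : ℝ) ≤ (b : ℝ) - 1 := by
        have : (a : ℝ) + 1 ≤ b := by exact_mod_cast hab
        linarith
      calc min ((a:ℝ)/n) ((b:ℝ)/n) ≤ (a:ℝ)/n := min_le_left _ _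
        _ ≤ ((b:ℝ) - 1)/n := by gcongr
        _ ≤ max (((a:ℝ)-1)/n) (((b:ℝ)-1)/n) := le_max_right _ _
    rcases lt_or_gt_of_ne hij with h | h
    · exact key i j h
    · exact (key j i h).symm
  have step2 : ∑ i ∈ Finset.Icc 1 n, ∫ x in A i, g x
      ≤ ∫ x in Set.Ioo (0:ℝ) 1, g x := by
    rw [← integral_biUnion_finset (Finset.Icc 1 n) (fun i _ => hAmeas i) hdisj
      (fun i _ => hg_int.mono_set (hAsub i))]
    refine setIntegral_mono_set hg_int ?_ (HasSubset.Subset.eventuallyLE ?_)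
    · refine (ae_restrict_iff' measurableSet_Ioo).2 (Filter.Eventually.of_forall ?_)
      intro x hx
      exact mul_nonneg (density_nonneg β hβ hx) (Real.rpow_nonneg (by have := hx.1; have h2 : (0:ℝ) ≤ 1/(n:ℝ) := one_div_nonneg.mpr hn0.le; linarith) _)
    · exact Set.iUnion₂_subset fun i _ => hAsub i
  exact le_trans (Finset.sum_le_sum step1) step2

lemma value_integral (β R : ℝ) (hβ : 0 < β) (hR : 0 ≤ R) :
    ∫ x in Set.Ioo (0:ℝ) 1, x ^ β * (1 - x) ^ β / betaFn (β + 1) (β + 1) * x ^ R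
      = betaFn (β + R + 1) (β + 1) / betaFn (β + 1) (β + 1) := by
  have e : ∫ x in Set.Ioo (0:ℝ) 1, x ^ β * (1 - x) ^ β / betaFn (β + 1) (β + 1) * x ^ R
      = ∫ x in Set.Ioo (0:ℝ) 1,
          (x ^ (β + R + 1 - 1) * (1 - x) ^ (β + 1 - 1)) / betaFn (β + 1) (β + 1) := by
    refine setIntegral_congr_fun measurableSet_Ioo (fun x hx => ?_)
    have e1 : β + R + 1 - 1 = β + R := by ring
    have e2 : β + 1 - 1 = β := by ring
    rw [e1, e2, Real.rpow_add hx.1]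
    ring
  rw [e, integral_div]
  rfl

lemma tends (β R : ℝ) (hβ : 0 < β) (hR : 0 ≤ R) :
    Filter.Tendsto (fun n : ℕ => ∫ x in Set.Ioo (0:ℝ) 1,
        x ^ β * (1 - x) ^ β / betaFn (β + 1) (β + 1) * (x + 1 / n) ^ R) Filter.atTop
      (nhds (betaFn (β + R + 1) (β + 1) / betaFn (β + 1) (β + 1))) := by
  rw [← value_integral β R hβ hR]
  set B := betaFn (β + 1) (β + 1)
  set d : ℝ → ℝ := fun x => x ^ β * (1 - x) ^ β / B with hd
  refine tendsto_integral_of_dominated_convergence (fun x => d x * 2 ^ R) ?_ ?_ ?_ ?_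
  · intro n
    exact ((((Real.continuous_rpow_const hβ.le).mul
      ((Real.continuous_rpow_const hβ.le).comp (continuous_const.sub continuous_id))).div_const
        _).mul ((Real.continuous_rpow_const hR).comp
        (continuous_id.add continuous_const))).aestronglyMeasurable
  · exact ((intgOn β β hβ.le hβ.le).div_const _).mul_const _
  · intro n
    refine (ae_restrict_iff' measurableSet_Ioo).2 (Filter.Eventually.of_forall ?_)
    intro x hx
    have hdx : 0 ≤ d x := density_nonneg β hβ hx
    have h1n : (0:ℝ) ≤ 1 / n := by positivity
    have h1n' : 1 / (n:ℝ) ≤ 1 := by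
      rcases n with _ | m
      · norm_num
      · rw [div_le_one (by positivity)]
        exact_mod_cast Nat.succ_le_succ (Nat.zero_le m)
    have hx0 : 0 ≤ x + 1 / n := by linarith [hx.1]
    have hp : 0 ≤ (x + 1/(n:ℝ)) ^ R := Real.rpow_nonneg hx0 _
    rw [Real.norm_eq_abs, abs_of_nonneg (mul_nonneg hdx hp)]
    refine mul_le_mul_of_nonneg_left ?_ hdx
    exact Real.rpow_le_rpow hx0 (by linarith [hx.2]) hR
  · refine (ae_restrict_iff' measurableSet_Ioo).2 (Filter.Eventually.of_forall ?_)
    intro x hx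
    refine Filter.Tendsto.const_mul (d x) ?_
    have h1 : Filter.Tendsto (fun n : ℕ => x + 1 / (n:ℝ)) Filter.atTop (nhds x) := by
      simpa using tendsto_const_nhds.add (tendsto_one_div_atTop_nhds_zero_nat (𝕜 := ℝ))
    exact h1.rpow_const (Or.inl hx.1.ne')

lemma ratio_eq (β R : ℝ) (hβ : 0 < β) (hR : 0 < R) :
    betaFn (β + R + 1) (β + 1) / betaFn (β + 1) (β + 1)
      = (Real.Gamma (2 * β + 2) / Real.Gamma (β + 1)) *
          (Real.Gamma (β + R + 1) / Real.Gamma (2 * β + R + 2)) := by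
  rw [betaFn_eq (β + R + 1) (β + 1) (by linarith) (by linarith),
    betaFn_eq (β + 1) (β + 1) (by linarith) (by linarith),
    show β + R + 1 + (β + 1) = 2 * β + R + 2 by ring,
    show β + 1 + (β + 1) = 2 * β + 2 by ring]
  have g1 := Real.Gamma_pos_of_pos (show (0:ℝ) < β + 1 by linarith)
  have g2 := Real.Gamma_pos_of_pos (show (0:ℝ) < β + R + 1 by linarith)
  have g3 := Real.Gamma_pos_of_pos (show (0:ℝ) < 2 * β + R + 2 by linarith)
  have g4 := Real.Gamma_pos_of_pos (show (0:ℝ) < 2 * β + 2 by linarith)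
  field_simp

lemma ratio_lt_half (β R : ℝ) (hβ : 0 < β) (hR : 1 < R) :
    betaFn (β + R + 1) (β + 1) / betaFn (β + 1) (β + 1) < 1 / 2 := by
  have hB : 0 < betaFn (β + 1) (β + 1) := betaFn_pos _ _ (by linarith) (by linarith)
  have hf : IntegrableOn (fun x : ℝ => x ^ (β + 2 - 1) * (1 - x) ^ (β + 1 - 1))
      (Set.Ioo 0 1) := intgOn _ _ (by linarith) (by linarith)
  have hg : IntegrableOn (fun x : ℝ => x ^ (β + R + 1 - 1) * (1 - x) ^ (β + 1 - 1))
      (Set.Ioo 0 1) := intgOn _ _ (by linarith) (by linarith)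
  set D : ℝ → ℝ := fun x => x ^ (β + 2 - 1) * (1 - x) ^ (β + 1 - 1)
      - x ^ (β + R + 1 - 1) * (1 - x) ^ (β + 1 - 1) with hD
  have hDpos : ∀ x ∈ Set.Ioo (0:ℝ) 1, 0 < D x := by
    intro x hx
    have e1 : β + 2 - 1 = β + 1 := by ring
    have e2 : β + R + 1 - 1 = β + R := by ring
    have hlt : x ^ (β + R) < x ^ (β + 1) :=
      Real.rpow_lt_rpow_of_exponent_gt hx.1 hx.2 (by linarith)
    have hpos : 0 < (1 - x) ^ (β + 1 - 1) :=
      Real.rpow_pos_of_pos (by linarith [hx.2]) _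
    simp only [hD, e1, e2]
    nlinarith
  have hnn : 0 ≤ᵐ[volume.restrict (Set.Ioo (0:ℝ) 1)] D :=
    (ae_restrict_iff' measurableSet_Ioo).2
      (Filter.Eventually.of_forall (fun x hx => (hDpos x hx).le))
  have hint : Integrable D (volume.restrict (Set.Ioo (0:ℝ) 1)) := hf.sub hg
  have hpos : 0 < ∫ x in Set.Ioo (0:ℝ) 1, D x := by
    rw [integral_pos_iff_support_of_nonneg_ae hnn hint]
    have hsub : Set.Ioo (0:ℝ) 1 ⊆ Function.support D :=
      fun x hx => (hDpos x hx).ne'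
    calc (0:ENNReal) < volume.restrict (Set.Ioo (0:ℝ) 1) (Set.Ioo (0:ℝ) 1) := by
          rw [Measure.restrict_apply_self]
          simp [Real.volume_Ioo]
      _ ≤ volume.restrict (Set.Ioo (0:ℝ) 1) (Function.support D) := measure_mono hsub
  rw [integral_sub hf hg] at hpos
  have h1 : betaFn (β + R + 1) (β + 1) < betaFn (β + 2) (β + 1) := by
    simp only [betaFn]
    linarith [hpos]
  have h2 : betaFn (β + 2) (β + 1) / betaFn (β + 1) (β + 1) = 1 / 2 := by
    rw [betaFn_eq (β + 2) (β + 1) (by linarith) (by linarith),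
      betaFn_eq (β + 1) (β + 1) (by linarith) (by linarith)]
    have g1 : Real.Gamma (β + 2) = (β + 1) * Real.Gamma (β + 1) := by
      rw [show β + 2 = (β + 1) + 1 by ring, Real.Gamma_add_one (by linarith : β + 1 ≠ 0)]
    have g2 : Real.Gamma (β + 2 + (β + 1)) = (2 * β + 2) * Real.Gamma (β + 1 + (β + 1)) := by
      rw [show β + 2 + (β + 1) = (β + 1 + (β + 1)) + 1 by ring,
        Real.Gamma_add_one (by linarith : β + 1 + (β + 1) ≠ 0),
        show β + 1 + (β + 1) = 2 * β + 2 by ring]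
    rw [g1, g2]
    have G1 := Real.Gamma_pos_of_pos (show (0:ℝ) < β + 1 by linarith)
    have G2 := Real.Gamma_pos_of_pos (show (0:ℝ) < β + 1 + (β + 1) by linarith)
    field_simp
  calc betaFn (β + R + 1) (β + 1) / betaFn (β + 1) (β + 1)
      < betaFn (β + 2) (β + 1) / betaFn (β + 1) (β + 1) := by gcongr
    _ = 1 / 2 := h2

lemma limsup_le_ratio (β R : ℝ) (hβ : 0 < β) (hR : 1 < R) :
    Filter.limsup
        (fun n : ℕ => ∑ i ∈ Finset.Icc 1 n,
          (betaMeasure β (Set.Ioc (((i : ℝ) - 1) / n) ((i : ℝ) / n))).toReal *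
            ((i : ℝ) / n) ^ R)
        Filter.atTop
      ≤ betaFn (β + R + 1) (β + 1) / betaFn (β + 1) (β + 1) := by
  set S : ℕ → ℝ := fun n => ∑ i ∈ Finset.Icc 1 n,
    (betaMeasure β (Set.Ioc (((i : ℝ) - 1) / n) ((i : ℝ) / n))).toReal * ((i : ℝ) / n) ^ R
  set c : ℕ → ℝ := fun n => ∫ x in Set.Ioo (0:ℝ) 1,
    x ^ β * (1 - x) ^ β / betaFn (β + 1) (β + 1) * (x + 1 / n) ^ R
  have hT : Filter.Tendsto c Filter.atTop
      (nhds (betaFn (β + R + 1) (β + 1) / betaFn (β + 1) (β + 1))) :=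
    tends β R hβ (by linarith)
  have hev : S ≤ᶠ[Filter.atTop] c :=
    Filter.eventually_atTop.2 ⟨1, fun n hn => sum_le β R hβ hR.le n hn⟩
  have hSnn : ∀ n, (0:ℝ) ≤ S n := fun n =>
    Finset.sum_nonneg fun i _ => mul_nonneg ENNReal.toReal_nonneg
      (Real.rpow_nonneg (by positivity) _)
  have h1 : Filter.limsup S Filter.atTop ≤ Filter.limsup c Filter.atTop :=
    Filter.limsup_le_limsup hev
      (Filter.isCoboundedUnder_le_of_le Filter.atTop hSnn)
      hT.isBoundedUnder_le
  rwa [hT.limsup_eq] at h1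

lemma ev_small (β R : ℝ) (hβ : 0 < β) (hR : 1 < R) :
    ∀ᶠ n : ℕ in Filter.atTop,
      2 * ∑ i ∈ Finset.Icc 1 n,
          (betaMeasure β (Set.Ioc (((i : ℝ) - 1) / n) ((i : ℝ) / n))).toReal *
            ((i : ℝ) / n) ^ R < 1 := by
  have hT := tends β R hβ (by linarith : (0:ℝ) ≤ R)
  have h2 := hT.eventually_lt_const (ratio_lt_half β R hβ hR)
  filter_upwards [h2, Filter.eventually_ge_atTop 1] with n hn1 hn2
  have := sum_le β R hβ hR.le n hn2
  linarith


/-- With `p_{n,i} = P((i−1)/n < τ ≤ i/n)` for `τ ~ Beta(β+1,β+1)`, `β > 0`: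
`limsup_n ∑_{i=1}^n p_{n,i}(i/n)^R ≤ (Γ(2β+2)/Γ(β+1))(Γ(β+R+1)/Γ(2β+R+2)) < 1/2`
for `R > 1`; in particular the contraction condition
`2 ∑ p_{n,i} (i/n)^{2r} < 1` holds for all large `n`. -/
theorem beta_contraction_condition (β R : ℝ) (hβ : 0 < β) (hR : 1 < R) :
    Filter.limsup
        (fun n : ℕ => ∑ i ∈ Finset.Icc 1 n,
          (betaMeasure β (Set.Ioc (((i : ℝ) - 1) / n) ((i : ℝ) / n))).toReal *
            ((i : ℝ) / n) ^ R)
        Filter.atTop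
      ≤ (Real.Gamma (2 * β + 2) / Real.Gamma (β + 1)) *
          (Real.Gamma (β + R + 1) / Real.Gamma (2 * β + R + 2)) ∧
    (Real.Gamma (2 * β + 2) / Real.Gamma (β + 1)) *
        (Real.Gamma (β + R + 1) / Real.Gamma (2 * β + R + 2)) < 1 / 2 ∧
    ∀ r : ℕ, 1 ≤ r → ∀ᶠ n : ℕ in Filter.atTop,
      2 * ∑ i ∈ Finset.Icc 1 n,
          (betaMeasure β (Set.Ioc (((i : ℝ) - 1) / n) ((i : ℝ) / n))).toReal *
            ((i : ℝ) / n) ^ (((2 * r : ℕ) : ℝ)) < 1 := by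

  refine ⟨?_, ?_, ?_⟩
  · rw [← ratio_eq β R hβ (by linarith)]
    exact limsup_le_ratio β R hβ hR
  · rw [← ratio_eq β R hβ (by linarith)]
    exact ratio_lt_half β R hβ hR
  · intro r hr
    have h2r : 1 < ((2 * r : ℕ) : ℝ) := by
      have : (1:ℝ) ≤ (r:ℝ) := by exact_mod_cast hr
      push_cast
      linarith
    exact ev_small β _ hβ h2r
end
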